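/- For every i ≥ 1, every word y with at least i occurrences of `true`, and every word x: ⟨a_{p,i} x | y⟩ = ⟨x | a_{p,i}* y⟩, where the left side is 0 if x has fewer than i occurrences of `true`. That is, deleting the i-th pawn is adjoint to doubling the i-th pawn. -/

import Mathlib

/-- A single pawn move: a pawn (`true`) advances one square rightward into an
empty square (`false`). -/
def PawnMove (w₀ w₁ : List Bool) : Prop :=
  ∃ u v : List Bool, w₀ = u ++ [true, false] ++ v ∧ w₁ = u ++ [false, true] ++ v

/-- Reachability: the reflexive-transitive closure of the single-move relation. -/
def Reach : List Bool → List Bool → Prop :=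
  Relation.ReflTransGen PawnMove

/-- The `ZMod 2` pairing `⟨w₀|w₁⟩`: `1` if `w₁` is reachable from `w₀`, else `0`. -/
noncomputable def pairing (w₀ w₁ : List Bool) : ZMod 2 :=
  open Classical in if Reach w₀ w₁ then 1 else 0

/-- Pairing extended to `Option`: any pairing in which one argument is `0`
(i.e. `none`) equals `0`. -/
noncomputable def pairingO : Option (List Bool) → Option (List Bool) → ZMod 2
  | some x, some y => pairing x y
  | none, _ => 0
  | _, none => 0

/-- `delOcc b i w` deletes the `i`-th occurrence (counted from the left,
starting at `1`) of `b` in `w`; it is `none` (i.e. `0`) if `w` has fewer than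
`i` occurrences of `b`. -/
def delOcc (b : Bool) : ℕ → List Bool → Option (List Bool)
  | _, [] => none
  | i, a :: w =>
    if a = b then
      if i = 1 then some w
      else Option.map (List.cons a) (delOcc b (i - 1) w)
    else Option.map (List.cons a) (delOcc b i w)

/-- `dblOcc b i w` doubles the `i`-th occurrence (counted from the left,
starting at `1`) of `b` in `w`, i.e. inserts an additional `b` immediately
before it; it is `none` (i.e. `0`) if `w` has fewer than `i` occurrences of
`b`. -/
def dblOcc (b : Bool) : ℕ → List Bool → Option (List Bool)
  | _, [] => none
  | i, a :: w =>
    if a = b then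
      if i = 1 then some (b :: a :: w)
      else Option.map (List.cons a) (dblOcc b (i - 1) w)
    else Option.map (List.cons a) (dblOcc b i w)

open List

/-- `Fprof w` lists, for each pawn (`true`) of `w` from left to right, the
number of empty squares (`false`) strictly before it. -/
def Fprof : List Bool → List ℕ
  | [] => []
  | true :: w => 0 :: Fprof w
  | false :: w => (Fprof w).map (· + 1)

lemma Fprof_length : ∀ w : List Bool, (Fprof w).length = w.count true
  | [] => rfl
  | true :: w => by simp [Fprof, Fprof_length w]
  | false :: w => by simp [Fprof, Fprof_length w]

lemma Fprof_chain : ∀ w : List Bool, (Fprof w).Chain' (· ≤ ·)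
  | [] => List.isChain_nil
  | true :: w => by
      rw [Fprof, List.Chain', List.isChain_cons]
      exact ⟨fun y _ => Nat.zero_le y, Fprof_chain w⟩
  | false :: w => by
      show ((Fprof w).map (· + 1)).Chain' (· ≤ ·)
      exact List.isChain_map_of_isChain (· + 1) (fun _ _ h => Nat.add_le_add_right h 1) (Fprof_chain w)

lemma Fprof_append : ∀ u w : List Bool,
    Fprof (u ++ w) = Fprof u ++ (Fprof w).map (· + u.count false)
  | [], w => by
      show Fprof w = [] ++ (Fprof w).map (· + count false [])
      simp
  | true :: u, w => by
      show 0 :: Fprof (u ++ w) = (0 :: Fprof u) ++ (Fprof w).map (· + count false (true :: u))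
      rw [Fprof_append u w]
      simp [List.count_cons]
  | false :: u, w => by
      show (Fprof (u ++ w)).map (· + 1)
          = (Fprof u).map (· + 1) ++ (Fprof w).map (· + count false (false :: u))
      rw [Fprof_append u w]
      rw [List.map_append, List.map_map]
      congr 1
      apply List.map_congr_left; intro a _; simp [List.count_cons]; omega

/-- The potential: total of (length-position) over pawns; decreases by one each move. -/
def Mw : List Bool → ℕ
  | [] => 0
  | a :: t => Mw t + (if a then t.length + 1 else 0)

lemma Mw_move : ∀ u v : List Bool,
    Mw (u ++ [false, true] ++ v) + 1 = Mw (u ++ [true, false] ++ v)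
  | [], v => by simp [Mw]; ring
  | a :: u, v => by
      have h := Mw_move u v
      have hl : (u ++ [false, true] ++ v).length = (u ++ [true, false] ++ v).length := by simp
      simp only [List.cons_append, Mw, List.append_eq]
      rw [hl]
      omega

lemma PawnMove.length_eq {w₀ w₁ : List Bool} (h : PawnMove w₀ w₁) :
    w₀.length = w₁.length := by
  obtain ⟨u, v, rfl, rfl⟩ := h; simp

lemma Reach.length_eq {w₀ w₁ : List Bool} (h : Reach w₀ w₁) :
    w₀.length = w₁.length := by
  induction h with
  | refl => rfl
  | tail _ h ih => exact ih.trans h.length_eq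

lemma forall₂_le_refl (l : List ℕ) : List.Forall₂ (· ≤ ·) l l :=
  List.forall₂_same.2 fun a _ => le_refl a

lemma forall₂_le_trans {a b c : List ℕ} (h₁ : List.Forall₂ (· ≤ ·) a b)
    (h₂ : List.Forall₂ (· ≤ ·) b c) : List.Forall₂ (· ≤ ·) a c := by
  induction h₁ generalizing c with
  | nil => cases h₂; exact List.Forall₂.nil
  | cons h _ ih =>
      cases h₂ with
      | cons h' t' => exact List.Forall₂.cons (le_trans h h') (ih t')

lemma PawnMove.forall₂ {w₀ w₁ : List Bool} (h : PawnMove w₀ w₁) :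
    List.Forall₂ (· ≤ ·) (Fprof w₀) (Fprof w₁) := by
  obtain ⟨u, v, rfl, rfl⟩ := h
  rw [Fprof_append, Fprof_append, Fprof_append, Fprof_append]
  refine List.rel_append (List.rel_append (forall₂_le_refl _) ?_) ?_
  · show List.Forall₂ (· ≤ ·) ((Fprof [true, false]).map (· + count false u))
        ((Fprof [false, true]).map (· + count false u))
    have e1 : Fprof [true, false] = [0] := rfl
    have e2 : Fprof [false, true] = [1] := rfl
    rw [e1, e2]
    exact List.forall₂_cons.2 ⟨by simp, List.Forall₂.nil⟩
  · have e : count false (u ++ [true, false]) = count false (u ++ [false, true]) := by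
      simp [List.count_append]
    rw [e]
    exact forall₂_le_refl _

lemma Reach.forall₂ {w₀ w₁ : List Bool} (h : Reach w₀ w₁) :
    List.Forall₂ (· ≤ ·) (Fprof w₀) (Fprof w₁) := by
  induction h with
  | refl => exact forall₂_le_refl _
  | tail _ h ih => exact forall₂_le_trans ih h.forall₂

lemma Reach.cons {w₀ w₁ : List Bool} (a : Bool) (h : Reach w₀ w₁) :
    Reach (a :: w₀) (a :: w₁) := by
  induction h with
  | refl => exact Relation.ReflTransGen.refl
  | tail _ h ih =>
      refine ih.tail ?_
      obtain ⟨u, v, rfl, rfl⟩ := h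
      exact ⟨a :: u, v, rfl, rfl⟩

lemma forall₂_shift (j : ℕ) : ∀ (L₁ R : List ℕ), (∀ r ∈ R, 1 ≤ r) →
    List.Forall₂ (· ≤ ·) (List.replicate (j+1) 0 ++ L₁) R →
    List.Forall₂ (· ≤ ·) (List.replicate j 0 ++ 1 :: L₁) R := by
  induction j with
  | zero =>
      intro L₁ R hR h
      simp only [List.replicate, List.nil_append, List.singleton_append] at h ⊢
      cases R with
      | nil => cases h
      | cons c t =>
          rcases List.forall₂_cons.1 h with ⟨_, ht⟩
          exact List.forall₂_cons.2 ⟨hR c (by simp), ht⟩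
  | succ j ih =>
      intro L₁ R hR h
      rw [List.replicate_succ] at h ⊢
      cases R with
      | nil => cases h
      | cons c t =>
          rcases List.forall₂_cons.1 h with ⟨hc, ht⟩
          exact List.forall₂_cons.2 ⟨hc, ih L₁ t (fun r hr => hR r (by simp [hr])) ht⟩

lemma Fprof_replicate : ∀ k : ℕ, Fprof (List.replicate k true) = List.replicate k 0
  | 0 => rfl
  | k+1 => by rw [List.replicate_succ, List.replicate_succ]; show 0 :: _ = _; rw [Fprof_replicate k]

lemma split_lemma : ∀ w : List Bool, false ∈ w → w.head? = some true →
    ∃ j rest, w = List.replicate (j+1) true ++ false :: rest := by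
  intro w
  induction w with
  | nil => simp
  | cons a t ih =>
      intro hm hh
      simp only [List.head?_cons, Option.some_inj] at hh
      subst hh
      cases t with
      | nil => simp at hm
      | cons b r =>
          cases b with
          | false => exact ⟨0, r, rfl⟩
          | true =>
              have hm' : false ∈ (true :: r) := by simpa using hm
              obtain ⟨j, rest, he⟩ := ih hm' rfl
              refine ⟨j+1, rest, ?_⟩
              rw [List.replicate_succ, List.cons_append, he]

lemma reach_of_aux : ∀ n : ℕ, ∀ w₀ w₁ : List Bool, w₀.length + Mw w₀ ≤ n →
    w₀.length = w₁.length → List.Forall₂ (· ≤ ·) (Fprof w₀) (Fprof w₁) → Reach w₀ w₁ := by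
  intro n
  induction n with
  | zero =>
      intro w₀ w₁ hn hl hf
      have h0 : w₀ = [] := List.length_eq_zero_iff.1 (by omega)
      have h1 : w₁ = [] := List.length_eq_zero_iff.1 (by omega)
      subst h0; subst h1; exact Relation.ReflTransGen.refl
  | succ n ih =>
      intro w₀ w₁ hn hl hf
      cases w₀ with
      | nil =>
          have h1 : w₁ = [] := List.length_eq_zero_iff.1 (by simpa using hl.symm)
          subst h1; exact Relation.ReflTransGen.refl
      | cons a t₀ =>
          cases w₁ with
          | nil => simp at hl
          | cons b t₁ =>
              cases a with
              | false =>
                  cases b with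
                  | false =>
                      have hf' : List.Forall₂ (· ≤ ·) (Fprof t₀) (Fprof t₁) := by
                        have : List.Forall₂ (· ≤ ·) ((Fprof t₀).map (· + 1))
                            ((Fprof t₁).map (· + 1)) := hf
                        rw [List.forall₂_map_left_iff, List.forall₂_map_right_iff] at this
                        exact this.imp (fun a b h => by omega)
                      have hm : Mw (false :: t₀) = Mw t₀ := by simp [Mw]
                      have := ih t₀ t₁ (by simp at hn; omega) (by simpa using hl) hf'
                      exact this.cons false
                  | true =>
                      exfalso
                      have hf' : List.Forall₂ (· ≤ ·) ((Fprof t₀).map (· + 1))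
                          (0 :: Fprof t₁) := hf
                      rcases List.forall₂_cons_right_iff.1 hf' with ⟨a, u, hab, _, he⟩
                      rcases List.map_eq_cons_iff.1 he with ⟨c, _, _, hc, _⟩
                      omega
              | true =>
                  cases b with
                  | true =>
                      have hf' : List.Forall₂ (· ≤ ·) (0 :: Fprof t₀) (0 :: Fprof t₁) := hf
                      rcases List.forall₂_cons.1 hf' with ⟨_, hft⟩
                      have hm : Mw (true :: t₀) = Mw t₀ + t₀.length + 1 := by
                        simp [Mw]; omega
                      have := ih t₀ t₁ (by simp at hn ⊢; omega) (by simpa using hl) hft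
                      exact this.cons true
                  | false =>
                      -- w₀ = true :: t₀ must contain a false
                      have hcount : (true :: t₀).count true = (false :: t₁).count true := by
                        rw [← Fprof_length, ← Fprof_length, hf.length_eq]
                      have hct : (false :: t₁).count true ≤ t₁.length := by
                        simp only [List.count_cons, if_neg (by simp : ¬(false = true))]
                        simpa using List.count_le_length (a := true) (l := t₁)
                      have hmem : false ∈ (true :: t₀) := by
                        by_contra hmem
                        have : (true :: t₀).count true = (true :: t₀).length := by
                          rw [List.count_eq_length]
                          intro b hb
                          cases b
                          · exact absurd hb hmem
                          · rfl
                        simp only [List.length_cons] at this hl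
                        omega
                      obtain ⟨j, rest, he⟩ := split_lemma _ hmem rfl
                      have hsplit : (true :: t₀)
                          = List.replicate j true ++ [true, false] ++ rest := by
                        rw [he, List.replicate_succ']
                        simp
                      set w₀' := List.replicate j true ++ [false, true] ++ rest with hw₀'
                      have hmove : PawnMove (true :: t₀) w₀' := ⟨_, _, hsplit, rfl⟩
                      -- lengths
                      have hlen' : w₀'.length = (true :: t₀).length := by
                        rw [hsplit, hw₀']; simp
                      -- measure
                      have hMw : Mw w₀' + 1 = Mw (true :: t₀) := by
                        rw [hsplit, hw₀']; exact Mw_move _ _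
                      -- Fprof computations
                      have hF₀ : Fprof (true :: t₀)
                          = List.replicate (j+1) 0 ++ (Fprof rest).map (· + 1) := by
                        rw [he, Fprof_append, Fprof_replicate]
                        have : Fprof (false :: rest) = (Fprof rest).map (· + 1) := rfl
                        rw [this]
                        simp [List.count_replicate]
                      have hF₀' : Fprof w₀'
                          = List.replicate j 0 ++ 1 :: (Fprof rest).map (· + 1) := by
                        rw [hw₀', List.append_assoc, Fprof_append, Fprof_replicate]
                        have : Fprof ([false, true] ++ rest)
                            = 1 :: (Fprof rest).map (· + 1) := by
                          show ((Fprof (true :: rest)).map (· + 1)) = _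
                          show ((0 :: Fprof rest).map (· + 1)) = _
                          simp
                        rw [this]
                        simp [List.count_replicate]
                      have hfw : List.Forall₂ (· ≤ ·) (Fprof w₀') (Fprof (false :: t₁)) := by
                        rw [hF₀']
                        have hR : ∀ r ∈ (Fprof t₁).map (· + 1), 1 ≤ r := by
                          intro r hr
                          rcases List.mem_map.1 hr with ⟨c, _, rfl⟩
                          omega
                        refine forall₂_shift j _ _ hR ?_
                        rw [← hF₀]
                        exact hf
                      have hreach := ih w₀' (false :: t₁)
                        (by rw [hlen']; omega) (by rw [hlen']; exact hl) hfw
                      exact Relation.ReflTransGen.head hmove hreach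

theorem reach_iff (w₀ w₁ : List Bool) :
    Reach w₀ w₁ ↔ w₀.length = w₁.length ∧ List.Forall₂ (· ≤ ·) (Fprof w₀) (Fprof w₁) :=
  ⟨fun h => ⟨h.length_eq, h.forall₂⟩,
   fun ⟨hl, hf⟩ => reach_of_aux (w₀.length + Mw w₀) w₀ w₁ le_rfl hl hf⟩

/-- Duplicate the entry at index `j`. -/
def dupIdx : ℕ → List ℕ → List ℕ
  | _, [] => []
  | 0, b :: t => b :: b :: t
  | j+1, b :: t => b :: dupIdx j t

lemma dupIdx_length : ∀ (j : ℕ) (B : List ℕ), j < B.length →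
    (dupIdx j B).length = B.length + 1
  | _, [], h => by simp at h
  | 0, b :: t, _ => by simp [dupIdx]
  | j+1, b :: t, h => by
      have := dupIdx_length j t (by simpa using h)
      simp [dupIdx, this]

lemma dupIdx_map (f : ℕ → ℕ) : ∀ (j : ℕ) (B : List ℕ),
    dupIdx j (B.map f) = (dupIdx j B).map f
  | j, [] => by cases j <;> rfl
  | 0, b :: t => rfl
  | j+1, b :: t => by simp [dupIdx, dupIdx_map f j t]

lemma eraseIdx_map (f : ℕ → ℕ) : ∀ (j : ℕ) (B : List ℕ),
    (B.map f).eraseIdx j = (B.eraseIdx j).map f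
  | j, [] => by cases j <;> rfl
  | 0, b :: t => rfl
  | j+1, b :: t => by simp [List.eraseIdx_cons_succ, eraseIdx_map f j t]

lemma key : ∀ (j : ℕ) (A B : List ℕ), A.Chain' (· ≤ ·) → j < A.length → j < B.length →
    (List.Forall₂ (· ≤ ·) (A.eraseIdx j) B ↔ List.Forall₂ (· ≤ ·) A (dupIdx j B)) := by
  intro j
  induction j with
  | zero =>
      intro A B hA hjA hjB
      cases A with
      | nil => simp at hjA
      | cons a A' =>
          cases B with
          | nil => simp at hjB
          | cons b B' =>
              simp only [List.eraseIdx_cons_zero, dupIdx]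
              constructor
              · intro h
                cases A' with
                | nil => cases h
                | cons a₂ A'' =>
                    rcases List.forall₂_cons.1 h with ⟨h1, _⟩
                    have ha : a ≤ a₂ := (List.isChain_cons_cons.1 hA).1
                    exact List.forall₂_cons.2 ⟨le_trans ha h1, h⟩
              · intro h
                exact (List.forall₂_cons.1 h).2
  | succ j ih =>
      intro A B hA hjA hjB
      cases A with
      | nil => simp at hjA
      | cons a A' =>
          cases B with
          | nil => simp at hjB
          | cons b B' =>
              simp only [List.eraseIdx_cons_succ, dupIdx]
              rw [List.forall₂_cons, List.forall₂_cons]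
              have := ih A' B' hA.tail (by simpa using hjA) (by simpa using hjB)
              rw [this]

lemma delOcc_none : ∀ (i : ℕ) (x : List Bool), x.count true < i → delOcc true i x = none := by
  intro i x
  induction x generalizing i with
  | nil => intro _; rfl
  | cons a t ih =>
      intro h
      cases a with
      | true =>
          have h1 : ¬ i = 1 := by simp [List.count_cons] at h; omega
          have h2 : t.count true < i - 1 := by simp [List.count_cons] at h; omega
          simp [delOcc, h1, ih _ h2]
      | false =>
          have h2 : t.count true < i := by simpa [List.count_cons] using h
          simp [delOcc, ih _ h2]

lemma delOcc_spec : ∀ (i : ℕ) (x : List Bool), 1 ≤ i → i ≤ x.count true →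
    ∃ x', delOcc true i x = some x' ∧ x'.length + 1 = x.length ∧
      Fprof x' = (Fprof x).eraseIdx (i-1) := by
  intro i x
  induction x generalizing i with
  | nil => intro h1 h2; simp at h2; omega
  | cons a t ih =>
      intro h1 h2
      cases a with
      | true =>
          by_cases hi : i = 1
          · subst hi
            exact ⟨t, by simp [delOcc], by simp, by
              show Fprof t = (0 :: Fprof t).eraseIdx 0
              simp⟩
          · have h1' : 1 ≤ i - 1 := by omega
            have h2' : i - 1 ≤ t.count true := by simp [List.count_cons] at h2; omega
            obtain ⟨t', he, hlen, hF⟩ := ih (i-1) h1' h2'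
            refine ⟨true :: t', by simp [delOcc, hi, he], by simp [← hlen], ?_⟩
            show 0 :: Fprof t' = (0 :: Fprof t).eraseIdx (i-1)
            have hix : i - 1 = (i-2) + 1 := by omega
            have hix2 : i - 1 - 1 = i - 2 := by omega
            rw [hix, List.eraseIdx_cons_succ, hF, hix2]
      | false =>
          have h2' : i ≤ t.count true := by simpa [List.count_cons] using h2
          obtain ⟨t', he, hlen, hF⟩ := ih i h1 h2'
          refine ⟨false :: t', by simp [delOcc, he], by simp [← hlen], ?_⟩
          show (Fprof t').map (· + 1) = ((Fprof t).map (· + 1)).eraseIdx (i-1)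
          rw [hF, _root_.eraseIdx_map]

lemma dblOcc_spec : ∀ (i : ℕ) (y : List Bool), 1 ≤ i → i ≤ y.count true →
    ∃ y', dblOcc true i y = some y' ∧ y'.length = y.length + 1 ∧
      Fprof y' = dupIdx (i-1) (Fprof y) := by
  intro i y
  induction y generalizing i with
  | nil => intro h1 h2; simp at h2; omega
  | cons a t ih =>
      intro h1 h2
      cases a with
      | true =>
          by_cases hi : i = 1
          · subst hi
            exact ⟨true :: true :: t, by simp [dblOcc], by simp, by
              show 0 :: 0 :: Fprof t = dupIdx 0 (0 :: Fprof t)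
              rfl⟩
          · have h1' : 1 ≤ i - 1 := by omega
            have h2' : i - 1 ≤ t.count true := by simp [List.count_cons] at h2; omega
            obtain ⟨t', he, hlen, hF⟩ := ih (i-1) h1' h2'
            refine ⟨true :: t', by simp [dblOcc, hi, he], by simp [hlen], ?_⟩
            show 0 :: Fprof t' = dupIdx (i-1) (0 :: Fprof t)
            have hix : i - 1 = (i-2) + 1 := by omega
            rw [hix]
            show 0 :: Fprof t' = 0 :: dupIdx (i-2) (Fprof t)
            have hix2 : i - 1 - 1 = i - 2 := by omega
            rw [hF, hix2]
      | false =>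
          have h2' : i ≤ t.count true := by simpa [List.count_cons] using h2
          obtain ⟨t', he, hlen, hF⟩ := ih i h1 h2'
          refine ⟨false :: t', by simp [dblOcc, he], by simp [hlen], ?_⟩
          show (Fprof t').map (· + 1) = dupIdx (i-1) ((Fprof t).map (· + 1))
          rw [hF, dupIdx_map]

/-- Deleting the `i`-th pawn is adjoint to doubling the `i`-th pawn:
`⟨a_{p,i} x | y⟩ = ⟨x | a_{p,i}* y⟩`. -/
theorem del_dbl_pawn_adjoint (i : ℕ) (hi : 1 ≤ i) (y : List Bool)
    (hy : i ≤ y.count true) (x : List Bool) :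
    pairingO (delOcc true i x) (some y) = pairingO (some x) (dblOcc true i y) := by
  obtain ⟨y', hy', hylen, hyF⟩ := dblOcc_spec i y hi hy
  rw [hy']
  by_cases hx : i ≤ x.count true
  · obtain ⟨x', hx', hxlen, hxF⟩ := delOcc_spec i x hi hx
    rw [hx']
    show pairing x' y = pairing x y'
    have hjx : i - 1 < (Fprof x).length := by rw [Fprof_length]; omega
    have hjy : i - 1 < (Fprof y).length := by rw [Fprof_length]; omega
    have hiff : Reach x' y ↔ Reach x y' := by
      rw [reach_iff, reach_iff, hxF, hyF]
      constructor
      · rintro ⟨h1, h2⟩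
        exact ⟨by omega, (key (i-1) _ _ (Fprof_chain x) hjx hjy).1 h2⟩
      · rintro ⟨h1, h2⟩
        exact ⟨by omega, (key (i-1) _ _ (Fprof_chain x) hjx hjy).2 h2⟩
    by_cases h : Reach x' y
    · rw [pairing, pairing, if_pos h, if_pos (hiff.1 h)]
    · rw [pairing, pairing, if_neg h, if_neg (fun hh => h (hiff.2 hh))]
  · rw [delOcc_none i x (by omega)]
    show (0 : ZMod 2) = pairing x y'
    have hnr : ¬ Reach x y' := by
      intro h
      have hlen := h.forall₂.length_eq
      rw [Fprof_length, hyF] at hlen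
      have hdl : (dupIdx (i-1) (Fprof y)).length = (Fprof y).length + 1 :=
        dupIdx_length _ _ (by rw [Fprof_length]; omega)
      rw [hdl, Fprof_length] at hlen
      omega
    rw [pairing, if_neg hnr]
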